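/- Under the Protocol 2 model: if N ≥ 2 and an attack (U_1,…,U_{N+1}) satisfies the no-error conditions (T), (Z) and (X), then Eve's final probe state is the same for all inputs: there exists a single unit vector f ∈ EuclideanSpace ℂ (Fin d) such that for every bitstring i and every m : Finset (Fin N), Ψ_m(δ_i) = f ⊗ δ_i ⊗ δ_{i∧m}. -/

import Mathlib

/-!
Protocol 2 model (semi-quantum key distribution, measure-resend):
see Boyer, Gelles, Kenigsberg, Mor, "Semi-Quantum Key Distribution".
-/

namespace SQKD2

/-- Bitstrings of length `N`. -/
abbrev Bits (N : ℕ) := Fin N → Bool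

/-- Index type of the global state space: Eve's probe, the `N` travelling qubits,
Bob's register. -/
abbrev Idx (N d : ℕ) := Fin d × Bits N × Bits N

/-- The global state space. -/
abbrev H (N d : ℕ) := EuclideanSpace ℂ (Idx N d)

/-- The mask `i ∧ m`. -/
def mask {N : ℕ} (i : Bits N) (m : Finset (Fin N)) : Bits N :=
  fun k => if k ∈ m then i k else false

/-- The underlying function of Bob's measure-resend permutation `M_k` on basis
indices: `(a, j, b) ↦ (a, j, b')` where `b'` agrees with `b` except
`b' k = b k XOR j k`. -/
def mPermFun {N d : ℕ} (k : Fin N) : Idx N d → Idx N d :=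
  fun p => (p.1, p.2.1, Function.update p.2.2 k (xor (p.2.2 k) (p.2.1 k)))

lemma mPermFun_involutive {N d : ℕ} (k : Fin N) :
    Function.Involutive (mPermFun (N := N) (d := d) k) := by
  rintro ⟨a, j, b⟩
  simp only [mPermFun]
  refine Prod.ext rfl (Prod.ext rfl ?_)
  funext l
  by_cases hl : l = k
  · subst hl
    simp [Bool.xor_assoc]
  · simp [Function.update_of_ne hl]

/-- Bob's measure-resend permutation of basis indices, as an equivalence. -/
def mPerm {N d : ℕ} (k : Fin N) : Idx N d ≃ Idx N d :=
  (mPermFun_involutive (N := N) (d := d) k).toPerm _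

/-- Bob's measure-resend unitary `M_k`. -/
noncomputable def M {N d : ℕ} (k : Fin N) : H N d ≃ₗᵢ[ℂ] H N d :=
  LinearIsometryEquiv.piLpCongrLeft 2 ℂ ℂ (mPerm (N := N) (d := d) k)

/-- A unitary of the global space acts only on the first two factors (Eve's
probe and the travelling qubits) if its matrix elements in the standard basis
are of the form `c((a',j'),(a,j))` when `b' = b` and vanish otherwise. -/
def ActsOnFirstTwo {N d : ℕ} (V : H N d ≃ₗᵢ[ℂ] H N d) : Prop :=
  ∃ c : (Fin d × Bits N) → (Fin d × Bits N) → ℂ,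
    ∀ (a : Fin d) (j b : Bits N) (a' : Fin d) (j' b' : Bits N),
      V (EuclideanSpace.single (a, j, b) 1) (a', j', b') =
        if b' = b then c (a', j') (a, j) else 0

/-- `W_m = U_{N+1} ∘ A_N ∘ U_N ∘ ⋯ ∘ A_1 ∘ U_1`, where `A_k = M_k` if `k ∈ m`
and the identity otherwise.  Here `U t` for `t : Fin (N+1)` is `U_{t+1}`. -/
noncomputable def W {N d : ℕ} (U : Fin (N + 1) → (H N d ≃ₗᵢ[ℂ] H N d)) (m : Finset (Fin N)) :
    H N d ≃ₗᵢ[ℂ] H N d :=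
  ((List.finRange N).foldl
    (fun acc k => (acc.trans (U k.castSucc)).trans
      (if k ∈ m then M k else LinearIsometryEquiv.refl ℂ (H N d)))
    (LinearIsometryEquiv.refl ℂ (H N d))).trans (U (Fin.last N))

/-- The initial state `ε₀ ⊗ φ ⊗ δ_0` for Alice's input `φ`. -/
noncomputable def init {N d : ℕ} (hd : 0 < d) (φ : EuclideanSpace ℂ (Bits N)) : H N d :=
  WithLp.toLp 2 fun (p : Idx N d) =>
    if p.1 = (⟨0, hd⟩ : Fin d) ∧ p.2.2 = (fun _ => false) then φ p.2.1 else 0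

/-- The final state `Ψ_m(φ) = W_m (ε₀ ⊗ φ ⊗ δ_0)`. -/
noncomputable def Psi {N d : ℕ} (U : Fin (N + 1) → (H N d ≃ₗᵢ[ℂ] H N d)) (hd : 0 < d)
    (m : Finset (Fin N)) (φ : EuclideanSpace ℂ (Bits N)) : H N d :=
  W U m (init hd φ)

/-- Condition (T): no error on TEST bits. -/
def CondT {N d : ℕ} (U : Fin (N + 1) → (H N d ≃ₗᵢ[ℂ] H N d)) (hd : 0 < d) : Prop :=
  ∀ (i : Bits N) (m : Finset (Fin N)) (a : Fin d) (j b : Bits N),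
    b ≠ mask i m → Psi U hd m (EuclideanSpace.single i 1) (a, j, b) = 0

/-- Condition (Z): no error on Z-CTRL bits. -/
def CondZ {N d : ℕ} (U : Fin (N + 1) → (H N d ≃ₗᵢ[ℂ] H N d)) (hd : 0 < d) : Prop :=
  ∀ (i : Bits N) (m : Finset (Fin N)) (a : Fin d) (j b : Bits N),
    j ≠ i → Psi U hd m (EuclideanSpace.single i 1) (a, j, b) = 0

/-- Condition (X): no error on X-CTRL bits. -/
def CondX {N d : ℕ} (U : Fin (N + 1) → (H N d ≃ₗᵢ[ℂ] H N d)) (hd : 0 < d) : Prop :=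
  ∀ (m : Finset (Fin N)) (k : Fin N), k ∉ m →
    ∀ i : Bits N, i k = false →
      ∀ (a : Fin d) (j b : Bits N),
        Psi U hd m (((Real.sqrt 2 : ℂ))⁻¹ •
            (EuclideanSpace.single i 1 +
              EuclideanSpace.single (Function.update i k true) 1)) (a, j, b) =
          Psi U hd m (((Real.sqrt 2 : ℂ))⁻¹ •
            (EuclideanSpace.single i 1 +
              EuclideanSpace.single (Function.update i k true) 1))
            (a, Function.update j k (!(j k)), b)

/-! ### Auxiliary machinery -/

section Aux

variable {N d : ℕ}

lemma esum_apply {α κ : Type*} (s : Finset κ) (f : κ → EuclideanSpace ℂ α) (p : α) :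
    (∑ q ∈ s, f q) p = ∑ q ∈ s, f q p := by
  classical
  induction s using Finset.induction with
  | empty => rfl
  | @insert _ _ h ih => rw [Finset.sum_insert h, Finset.sum_insert h, ← ih]; rfl

lemma eexpand {α : Type*} [Fintype α] [DecidableEq α] (v : EuclideanSpace ℂ α) :
    v = ∑ q, v q • EuclideanSpace.single q 1 := by
  ext p
  rw [esum_apply]
  have h : ∀ q : α, (v q • EuclideanSpace.single q 1) p = if p = q then v q else 0 := by
    intro q
    show v q * EuclideanSpace.single q 1 p = _
    simp [EuclideanSpace.single_apply]
  simp only [h, Finset.sum_ite_eq, Finset.mem_univ, if_true]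

lemma eval_sum (G : H N d ≃ₗᵢ[ℂ] H N d) (v : H N d) (p : Idx N d) :
    G v p = ∑ q, v q * G (EuclideanSpace.single q 1) p := by
  conv_lhs => rw [eexpand v]
  rw [map_sum, esum_apply]
  exact Finset.sum_congr rfl fun q _ => by rw [map_smul]; rfl

lemma acts_eval {G : H N d ≃ₗᵢ[ℂ] H N d} {c : (Fin d × Bits N) → (Fin d × Bits N) → ℂ}
    (hc : ∀ (a : Fin d) (j b : Bits N) (a' : Fin d) (j' b' : Bits N),
      G (EuclideanSpace.single (a, j, b) 1) (a', j', b') = if b' = b then c (a', j') (a, j) else 0)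
    (v : H N d) (a : Fin d) (j b : Bits N) :
    G v (a, j, b) = ∑ x : Fin d × Bits N, v (x.1, x.2, b) * c (a, j) x := by
  rw [eval_sum G v (a, j, b), Fintype.sum_prod_type]
  conv_rhs => rw [Fintype.sum_prod_type]
  refine Finset.sum_congr rfl fun a' _ => ?_
  rw [Fintype.sum_prod_type]
  refine Finset.sum_congr rfl fun j' _ => ?_
  simp only [hc, mul_ite, mul_zero, Finset.sum_ite_eq, Finset.mem_univ, if_true]

/-- `b`-coordinate flip at `k`, on indices. -/
def flipb (k : Fin N) (p : Idx N d) : Idx N d :=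
  (p.1, p.2.1, Function.update p.2.2 k (!(p.2.2 k)))

/-- `b`-coordinate flip at `k`, on states. -/
def Tflip (k : Fin N) (v : H N d) : H N d := WithLp.toLp 2 fun p => v (flipb k p)

/-- States supported on `b k = false`. -/
def Supp0 (k : Fin N) (v : H N d) : Prop := ∀ p : Idx N d, p.2.2 k ≠ false → v p = 0

/-- The two structural properties preserved along the circuit. -/
def GoodAt (k : Fin N) (G : H N d → H N d) : Prop :=
  (∀ v, G (Tflip k v) = Tflip k (G v)) ∧ ∀ v, Supp0 k v → Supp0 k (G v)

lemma goodAt_id (k : Fin N) : GoodAt (d := d) k (fun v => v) :=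
  ⟨fun _ => rfl, fun _ h => h⟩

lemma goodAt_comp {k : Fin N} {G1 G2 : H N d → H N d} (h1 : GoodAt k G1) (h2 : GoodAt k G2) :
    GoodAt k (fun v => G2 (G1 v)) :=
  ⟨fun v => by show G2 (G1 (Tflip k v)) = Tflip k (G2 (G1 v)); rw [h1.1, h2.1],
   fun v hv => h2.2 _ (h1.2 _ hv)⟩

lemma goodAt_acts {G : H N d ≃ₗᵢ[ℂ] H N d} (hG : ActsOnFirstTwo G) (k : Fin N) :
    GoodAt k ⇑G := by
  obtain ⟨c, hc⟩ := hG
  constructor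
  · intro v
    ext p
    obtain ⟨a, j, b⟩ := p
    show G (Tflip k v) (a, j, b) = G v (a, j, Function.update b k (!(b k)))
    rw [acts_eval hc, acts_eval hc]
    rfl
  · intro v hv p hp
    obtain ⟨a, j, b⟩ := p
    rw [acts_eval hc]
    exact Finset.sum_eq_zero fun x _ => by rw [hv (x.1, x.2, b) hp, zero_mul]

lemma flipb_mPermFun {k l : Fin N} (hlk : l ≠ k) (p : Idx N d) :
    flipb k (mPermFun l p) = mPermFun l (flipb k p) := by
  obtain ⟨a, j, b⟩ := p
  simp only [flipb, mPermFun]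
  refine Prod.ext rfl (Prod.ext rfl ?_)
  rw [Function.update_of_ne (Ne.symm hlk) _ b, Function.update_of_ne hlk _ b,
    Function.update_comm hlk]

lemma M_apply (l : Fin N) (v : H N d) (p : Idx N d) : M l v p = v (mPermFun l p) := rfl

lemma goodAt_M {k l : Fin N} (hlk : l ≠ k) : GoodAt (d := d) k ⇑(M l) := by
  constructor
  · intro v
    ext p
    show v (flipb k (mPermFun l p)) = v (mPermFun l (flipb k p))
    rw [flipb_mPermFun hlk]
  · intro v hv p hp
    refine hv _ ?_
    show (Function.update p.2.2 l _) k ≠ false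
    rwa [Function.update_of_ne (Ne.symm hlk)]

variable (U : Fin (N + 1) → (H N d ≃ₗᵢ[ℂ] H N d))

/-- One step of the circuit fold. -/
noncomputable def Fstep (m : Finset (Fin N)) :
    (H N d ≃ₗᵢ[ℂ] H N d) → Fin N → (H N d ≃ₗᵢ[ℂ] H N d) :=
  fun acc k => (acc.trans (U k.castSucc)).trans
    (if k ∈ m then M k else LinearIsometryEquiv.refl ℂ (H N d))

lemma W_eq (m : Finset (Fin N)) :
    W U m = ((List.finRange N).foldl (Fstep U m)
      (LinearIsometryEquiv.refl ℂ (H N d))).trans (U (Fin.last N)) := rfl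

lemma foldl_eval (m : Finset (Fin N)) (L : List (Fin N)) (Q : H N d ≃ₗᵢ[ℂ] H N d) (x : H N d) :
    L.foldl (Fstep U m) Q x =
      (L.foldl (Fstep U m) (LinearIsometryEquiv.refl ℂ (H N d))) (Q x) := by
  induction L generalizing Q x with
  | nil => rfl
  | cons l L ih =>
    rw [List.foldl_cons, List.foldl_cons, ih (Fstep U m Q l) x,
      ih (Fstep U m (LinearIsometryEquiv.refl ℂ (H N d)) l) (Q x)]
    rfl

lemma foldl_congr {m m' : Finset (Fin N)} (L : List (Fin N))
    (h : ∀ l ∈ L, (l ∈ m ↔ l ∈ m')) (Q : H N d ≃ₗᵢ[ℂ] H N d) :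
    L.foldl (Fstep U m) Q = L.foldl (Fstep U m') Q := by
  induction L generalizing Q with
  | nil => rfl
  | cons l L ih =>
    rw [List.foldl_cons, List.foldl_cons]
    have hm : (l ∈ m) = (l ∈ m') := propext (h l (List.mem_cons_self))
    have hF : Fstep U m Q l = Fstep U m' Q l := by simp only [Fstep, hm]
    rw [hF]
    exact ih (fun x hx => h x (List.mem_cons_of_mem _ hx)) _

lemma goodAt_foldl (hU : ∀ t, ActsOnFirstTwo (U t)) (k : Fin N) (m : Finset (Fin N))
    (L : List (Fin N)) (hL : ∀ l ∈ L, l ≠ k) (Q : H N d ≃ₗᵢ[ℂ] H N d) (hQ : GoodAt k ⇑Q) :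
    GoodAt k ⇑(L.foldl (Fstep U m) Q) := by
  induction L generalizing Q with
  | nil => exact hQ
  | cons l L ih =>
    rw [List.foldl_cons]
    refine ih (fun x hx => hL x (List.mem_cons_of_mem _ hx)) _ ?_
    have h1 : GoodAt k ⇑(U l.castSucc) := goodAt_acts (hU _) k
    have h2 : GoodAt k ⇑(if l ∈ m then M l else LinearIsometryEquiv.refl ℂ (H N d)) := by
      split
      · exact goodAt_M (hL l (List.mem_cons_self))
      · exact goodAt_id k
    have h3 : GoodAt k (fun x => (if l ∈ m then M l else LinearIsometryEquiv.refl ℂ (H N d))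
        ((U l.castSucc) (Q x))) := goodAt_comp (goodAt_comp hQ h1) h2
    exact h3

end Aux

section Main

variable {N d : ℕ} (U : Fin (N + 1) → (H N d ≃ₗᵢ[ℂ] H N d)) (hd : 0 < d)

lemma psi_rep (m : Finset (Fin N)) (φ : EuclideanSpace ℂ (Bits N)) (p : Idx N d) :
    Psi U hd m φ p =
      U (Fin.last N) (((List.finRange N).foldl (Fstep U m)
        (LinearIsometryEquiv.refl ℂ (H N d))) (init hd φ)) p := rfl

lemma supp0_init (k : Fin N) (φ : EuclideanSpace ℂ (Bits N)) : Supp0 k (init hd φ) := by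
  intro p hp
  have h : init hd φ p =
      if p.1 = (⟨0, hd⟩ : Fin d) ∧ p.2.2 = (fun _ => false) then φ p.2.1 else 0 := rfl
  rw [h, if_neg]
  rintro ⟨-, h2⟩
  exact hp (by rw [h2])

lemma psi_insert (hU : ∀ t, ActsOnFirstTwo (U t)) (hT : CondT U hd)
    {k : Fin N} {m : Finset (Fin N)} (hk : k ∉ m) (i : Bits N) (a : Fin d) (j b : Bits N) :
    Psi U hd (insert k m) (EuclideanSpace.single i 1) (a, j, b) =
      Psi U hd m (EuclideanSpace.single i 1)
        (a, j, Function.update b k (xor (b k) (i k))) := by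
  classical
  set φ : EuclideanSpace ℂ (Bits N) := EuclideanSpace.single i 1 with hφ
  set v0 : H N d := init hd φ with hv0
  set L1 := (List.finRange N).take k.val with hL1def
  set L2 := (List.finRange N).drop (k.val + 1) with hL2def
  have hsplit : List.finRange N = L1 ++ k :: L2 := by
    rw [hL1def, hL2def]
    conv_lhs => rw [← List.take_append_drop k.val (List.finRange N)]
    congr 1
    rw [← List.getElem_cons_drop (as := List.finRange N) (i := k.val) (by simp [k.isLt])]
    simp
  have hL1k : ∀ l ∈ L1, l ≠ k := by
    intro l hl
    rw [hL1def, List.mem_iff_getElem] at hl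
    obtain ⟨idx, hidx, rfl⟩ := hl
    rw [List.getElem_take] at *
    have hidx' : idx < k.val := by simpa using hidx
    simp only [List.getElem_finRange]
    intro hcon
    have := congrArg Fin.val hcon
    simp at this
    omega
  have hL2k : ∀ l ∈ L2, l ≠ k := by
    intro l hl
    rw [hL2def, List.mem_iff_getElem] at hl
    obtain ⟨idx, hidx, rfl⟩ := hl
    rw [List.getElem_drop] at *
    simp only [List.getElem_finRange]
    intro hcon
    have := congrArg Fin.val hcon
    simp at this
    omega
  have hiff : ∀ l : Fin N, l ≠ k → ((l ∈ insert k m) ↔ (l ∈ m)) := by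
    intro l hl; simp [Finset.mem_insert, hl]
  set S : H N d :=
    U k.castSucc ((L1.foldl (Fstep U m) (LinearIsometryEquiv.refl ℂ (H N d))) v0) with hSdef
  have hPsim : ∀ p, Psi U hd m φ p =
      U (Fin.last N) ((L2.foldl (Fstep U m) (LinearIsometryEquiv.refl ℂ (H N d))) S) p := by
    intro p
    rw [psi_rep]
    have h1 : (List.finRange N).foldl (Fstep U m) (LinearIsometryEquiv.refl ℂ (H N d)) v0 =
        (L2.foldl (Fstep U m) (LinearIsometryEquiv.refl ℂ (H N d))) S := by
      conv_lhs => rw [hsplit]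
      rw [List.foldl_append, List.foldl_cons, foldl_eval]
      congr 1
      show (if k ∈ m then M k else LinearIsometryEquiv.refl ℂ (H N d))
        ((U k.castSucc) ((L1.foldl (Fstep U m) (LinearIsometryEquiv.refl ℂ (H N d))) v0)) = S
      rw [if_neg hk]
      rfl
    rw [h1]
  have hPsim' : ∀ p, Psi U hd (insert k m) φ p =
      U (Fin.last N) ((L2.foldl (Fstep U m) (LinearIsometryEquiv.refl ℂ (H N d))) (M k S)) p := by
    intro p
    rw [psi_rep]
    have h1 : (List.finRange N).foldl (Fstep U (insert k m))
          (LinearIsometryEquiv.refl ℂ (H N d)) v0 =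
        (L2.foldl (Fstep U m) (LinearIsometryEquiv.refl ℂ (H N d))) (M k S) := by
      conv_lhs => rw [hsplit]
      rw [List.foldl_append, List.foldl_cons, foldl_eval,
        foldl_congr U L2 (fun l hl => hiff l (hL2k l hl))]
      congr 1
      show (if k ∈ insert k m then M k else LinearIsometryEquiv.refl ℂ (H N d))
        ((U k.castSucc)
          ((L1.foldl (Fstep U (insert k m)) (LinearIsometryEquiv.refl ℂ (H N d))) v0)) = M k S
      rw [if_pos (Finset.mem_insert_self k m),
        foldl_congr U L1 (fun l hl => hiff l (hL1k l hl))]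
    rw [h1]
  set Rf : H N d → H N d := fun v =>
    U (Fin.last N) ((L2.foldl (Fstep U m) (LinearIsometryEquiv.refl ℂ (H N d))) v) with hRf
  have hGood : GoodAt k Rf :=
    goodAt_comp (goodAt_foldl U hU k m L2 hL2k _ (goodAt_id k)) (goodAt_acts (hU _) k)
  have hSupp0S : Supp0 k S := by
    have h0 : Supp0 k v0 := supp0_init hd k φ
    have hg : GoodAt k (fun v =>
        U k.castSucc ((L1.foldl (Fstep U m) (LinearIsometryEquiv.refl ℂ (H N d))) v)) :=
      goodAt_comp (goodAt_foldl U hU k m L1 hL1k _ (goodAt_id k)) (goodAt_acts (hU _) k)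
    exact hg.2 v0 h0
  set S1 : H N d := WithLp.toLp 2 (fun p => if p.2.1 k then S p else 0) with hS1def
  set S0 : H N d := WithLp.toLp 2 (fun p => if p.2.1 k then 0 else S p) with hS0def
  have hSupp0S1 : Supp0 k S1 := by
    intro p hp
    show (if p.2.1 k then S p else 0) = 0
    by_cases h : p.2.1 k <;> simp [h, hSupp0S p hp]
  have hSupp0S0 : Supp0 k S0 := by
    intro p hp
    show (if p.2.1 k then 0 else S p) = 0
    by_cases h : p.2.1 k <;> simp [h, hSupp0S p hp]
  have hSupp0Q1 : Supp0 k (Rf S1) := hGood.2 _ hSupp0S1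
  have hSupp0Q0 : Supp0 k (Rf S0) := hGood.2 _ hSupp0S0
  have hPm : ∀ p, Psi U hd m φ p = Rf S1 p + Rf S0 p := by
    intro p
    rw [hPsim p]
    have hSvec : S = S1 + S0 := by
      ext q
      show S q = S1 q + S0 q
      by_cases h : q.2.1 k
      · show S q = (if q.2.1 k then S q else 0) + (if q.2.1 k then 0 else S q)
        rw [if_pos h, if_pos h, add_zero]
      · show S q = (if q.2.1 k then S q else 0) + (if q.2.1 k then 0 else S q)
        rw [if_neg h, if_neg h, zero_add]
    rw [hSvec, map_add, map_add]
    rfl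
  have hPm' : ∀ p, Psi U hd (insert k m) φ p = Rf S1 (flipb k p) + Rf S0 p := by
    intro p
    rw [hPsim' p]
    have hMvec : M k S = Tflip k S1 + S0 := by
      ext q
      obtain ⟨a', j', b'⟩ := q
      show S (a', j', Function.update b' k (xor (b' k) (j' k))) =
        S1 (flipb k (a', j', b')) + S0 (a', j', b')
      by_cases h : j' k
      · have : S1 (flipb k (a', j', b')) = S (a', j', Function.update b' k (!(b' k))) := by
          show (if j' k then _ else 0) = _
          rw [if_pos h]
          rfl
        rw [this]
        have h0 : S0 (a', j', b') = 0 := by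
          show (if j' k then 0 else S (a', j', b')) = 0
          rw [if_pos h]
        rw [h0, add_zero, h, Bool.xor_true]
      · have h1 : S1 (flipb k (a', j', b')) = 0 := by
          show (if j' k then _ else 0) = 0
          rw [if_neg h]
        have h0 : S0 (a', j', b') = S (a', j', b') := by
          show (if j' k then 0 else S (a', j', b')) = S (a', j', b')
          rw [if_neg h]
        rw [h1, h0, zero_add]
        have hjf : j' k = false := by simpa using h
        rw [hjf, Bool.xor_false, Function.update_eq_self]
    rw [hMvec, map_add, map_add]
    have hcomm := hGood.1 S1
    show Rf (Tflip k S1) p + Rf S0 p = Rf S1 (flipb k p) + Rf S0 p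
    rw [hcomm]
    rfl
  have hmaskk : mask i (insert k m) k = i k := by simp [mask]
  rcases Bool.eq_false_or_eq_true (i k) with hik | hik
  · -- i k = true : Q0 vanishes
    have hQ0zero : ∀ p, Rf S0 p = 0 := by
      intro p
      by_cases hb : p.2.2 k = false
      · obtain ⟨a', j', b'⟩ := p
        have hne : b' ≠ mask i (insert k m) := by
          intro hcon
          have h2 := congrFun hcon k
          rw [hmaskk, hik] at h2
          have hbk : b' k = false := hb
          rw [hbk] at h2
          exact absurd h2 (by decide)
        have hT0 := hT i (insert k m) a' j' b' hne
        rw [show Psi U hd (insert k m) (EuclideanSpace.single i 1) = Psi U hd (insert k m) φ from rfl,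
          hPm' (a', j', b')] at hT0
        have h1' : Rf S1 (flipb k ((a', j', b') : Idx N d)) = 0 := by
          refine hSupp0Q1 _ ?_
          show (Function.update b' k (!(b' k))) k ≠ false
          rw [Function.update_self]
          have hbk : b' k = false := hb
          rw [hbk]
          simp
        rw [h1', zero_add] at hT0
        exact hT0
      · exact hSupp0Q0 p (by simpa using hb)
    have hxor : xor (b k) (i k) = !(b k) := by rw [hik, Bool.xor_true]
    rw [hxor, hPm' (a, j, b), hPm (a, j, Function.update b k (!(b k)))]
    simp only [hQ0zero, add_zero]
    rfl
  · -- i k = false : Q1 vanishes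
    have hQ1zero : ∀ p, Rf S1 p = 0 := by
      intro p
      by_cases hb : p.2.2 k = false
      · obtain ⟨a', j', b'⟩ := p
        have hne : Function.update b' k true ≠ mask i (insert k m) := by
          intro hcon
          have h2 := congrFun hcon k
          rw [Function.update_self, hmaskk, hik] at h2
          exact absurd h2 (by decide)
        have hT0 := hT i (insert k m) a' j' (Function.update b' k true) hne
        rw [show Psi U hd (insert k m) (EuclideanSpace.single i 1) = Psi U hd (insert k m) φ from rfl,
          hPm' (a', j', Function.update b' k true)] at hT0
        have h0' : Rf S0 ((a', j', Function.update b' k true) : Idx N d) = 0 := by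
          refine hSupp0Q0 _ ?_
          show (Function.update b' k true) k ≠ false
          rw [Function.update_self]
          simp
        rw [h0', add_zero] at hT0
        have hidx : flipb k ((a', j', Function.update b' k true) : Idx N d) = (a', j', b') := by
          simp only [flipb]
          refine Prod.ext rfl (Prod.ext rfl ?_)
          funext l
          rcases eq_or_ne l k with rfl | hl
          · simp only [Function.update_self]
            have hbk : b' l = false := hb
            rw [hbk]
            rfl
          · simp [Function.update_of_ne hl]
        rw [hidx] at hT0
        exact hT0
      · exact hSupp0Q1 p (by simpa using hb)
    have hupdate : Function.update b k (xor (b k) (i k)) = b := by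
      rw [hik, Bool.xor_false, Function.update_eq_self]
    rw [hupdate, hPm' (a, j, b), hPm (a, j, b)]
    simp only [hQ1zero, zero_add]

lemma psi_support (hT : CondT U hd) (hZ : CondZ U hd) (i : Bits N) (m : Finset (Fin N))
    (a : Fin d) (j b : Bits N) :
    Psi U hd m (EuclideanSpace.single i 1) (a, j, b) =
      if j = i ∧ b = mask i m then
        Psi U hd m (EuclideanSpace.single i 1) (a, i, mask i m) else 0 := by
  split_ifs with h
  · rw [h.1, h.2]
  · by_cases hj : j = i
    · exact hT i m a j b (fun hb => h ⟨hj, hb⟩)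
    · exact hZ i m a j b hj

lemma mask_empty (i : Bits N) : mask i ∅ = fun _ => false := by
  funext l; simp [mask]

lemma coef_insert (hU : ∀ t, ActsOnFirstTwo (U t)) (hT : CondT U hd)
    {k : Fin N} {m : Finset (Fin N)} (hk : k ∉ m) (i : Bits N) (a : Fin d) :
    Psi U hd (insert k m) (EuclideanSpace.single i 1) (a, i, mask i (insert k m)) =
      Psi U hd m (EuclideanSpace.single i 1) (a, i, mask i m) := by
  rw [psi_insert U hd hU hT hk]
  have hmask : Function.update (mask i (insert k m)) k
      (xor ((mask i (insert k m)) k) (i k)) = mask i m := by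
    funext l
    rcases eq_or_ne l k with rfl | hl
    · rw [Function.update_self]
      simp [mask, hk]
    · rw [Function.update_of_ne hl]
      simp [mask, Finset.mem_insert, hl]
  rw [hmask]

lemma coef_m (hU : ∀ t, ActsOnFirstTwo (U t)) (hT : CondT U hd) (i : Bits N)
    (m : Finset (Fin N)) (a : Fin d) :
    Psi U hd m (EuclideanSpace.single i 1) (a, i, mask i m) =
      Psi U hd ∅ (EuclideanSpace.single i 1) (a, i, mask i ∅) := by
  classical
  induction m using Finset.induction with
  | empty => rfl
  | @insert k s hk ih => rw [coef_insert U hd hU hT hk, ih]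

lemma init_add (φ ψ : EuclideanSpace ℂ (Bits N)) :
    init hd (φ + ψ) = init hd φ + init hd ψ := by
  ext p
  show (if p.1 = (⟨0, hd⟩ : Fin d) ∧ p.2.2 = (fun _ => false) then (φ + ψ) p.2.1 else 0) =
    (if p.1 = (⟨0, hd⟩ : Fin d) ∧ p.2.2 = (fun _ => false) then φ p.2.1 else 0) +
    (if p.1 = (⟨0, hd⟩ : Fin d) ∧ p.2.2 = (fun _ => false) then ψ p.2.1 else 0)
  split_ifs with h
  · rfl
  · rw [add_zero]

lemma init_smul (c : ℂ) (φ : EuclideanSpace ℂ (Bits N)) :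
    init hd (c • φ) = c • init hd φ := by
  ext p
  show (if p.1 = (⟨0, hd⟩ : Fin d) ∧ p.2.2 = (fun _ => false) then (c • φ) p.2.1 else 0) =
    c * (if p.1 = (⟨0, hd⟩ : Fin d) ∧ p.2.2 = (fun _ => false) then φ p.2.1 else 0)
  split_ifs with h
  · rfl
  · rw [mul_zero]

lemma psi_lin (m : Finset (Fin N)) (i i' : Bits N) (p : Idx N d) :
    Psi U hd m (((Real.sqrt 2 : ℂ))⁻¹ •
        (EuclideanSpace.single i 1 + EuclideanSpace.single i' 1)) p =
      (Real.sqrt 2 : ℂ)⁻¹ * (Psi U hd m (EuclideanSpace.single i 1) p +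
        Psi U hd m (EuclideanSpace.single i' 1) p) := by
  show W U m (init hd _) p = _
  rw [init_smul, init_add, map_smul, map_add]
  rfl

lemma coef_flip (hT : CondT U hd) (hZ : CondZ U hd) (hX : CondX U hd)
    (i : Bits N) (k : Fin N) (hik : i k = false) (a : Fin d) :
    Psi U hd ∅ (EuclideanSpace.single i 1) (a, i, mask i ∅) =
      Psi U hd ∅ (EuclideanSpace.single (Function.update i k true) 1)
        (a, Function.update i k true, mask (Function.update i k true) ∅) := by
  set i' := Function.update i k true with hi'def
  have hne : i ≠ i' := by
    intro h
    have h2 := congrFun h k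
    rw [hi'def, Function.update_self, hik] at h2
    exact Bool.noConfusion h2
  have hX0 := hX ∅ k (Finset.notMem_empty k) i hik a i (fun _ => false)
  rw [psi_lin, psi_lin] at hX0
  have hupj : Function.update i k (!(i k)) = i' := by rw [hik]; rfl
  rw [hupj] at hX0
  have e2 : Psi U hd ∅ (EuclideanSpace.single i' 1) (a, i, fun _ => false) = 0 :=
    hZ i' ∅ a i _ hne
  have e3 : Psi U hd ∅ (EuclideanSpace.single i 1) (a, i', fun _ => false) = 0 :=
    hZ i ∅ a i' _ (Ne.symm hne)
  rw [e2, e3, add_zero, zero_add] at hX0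
  have hc : (Real.sqrt 2 : ℂ)⁻¹ ≠ 0 := by
    have h2 : (0:ℝ) < Real.sqrt 2 := Real.sqrt_pos.mpr (by norm_num)
    exact inv_ne_zero (by exact_mod_cast h2.ne')
  have hkey := mul_left_cancel₀ hc hX0
  rw [mask_empty i, mask_empty i']
  exact hkey

lemma coef_all (hT : CondT U hd) (hZ : CondZ U hd) (hX : CondX U hd)
    (s : Finset (Fin N)) :
    ∀ i : Bits N, (∀ k, i k = true ↔ k ∈ s) → ∀ a : Fin d,
    Psi U hd ∅ (EuclideanSpace.single i 1) (a, i, mask i ∅) =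
      Psi U hd ∅ (EuclideanSpace.single (fun _ => false) 1)
        (a, (fun _ => false), mask (fun _ => false) ∅) := by
  classical
  induction s using Finset.induction with
  | empty =>
    intro i hi a
    have : i = fun _ => false := by
      funext l
      have h2 : i l ≠ true := by simp [hi l]
      exact Bool.eq_false_iff.mpr h2
    rw [this]
  | @insert k s hk ih =>
    intro i hi a
    set i0 := Function.update i k false with hi0def
    have hik0 : i0 k = false := Function.update_self _ _ _
    have hupd : Function.update i0 k true = i := by
      funext l
      rcases eq_or_ne l k with rfl | hl
      · rw [Function.update_self]
        exact ((hi l).mpr (Finset.mem_insert_self _ _)).symm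
      · rw [Function.update_of_ne hl, hi0def, Function.update_of_ne hl]
    have h1 := coef_flip U hd hT hZ hX i0 k hik0 a
    rw [hupd] at h1
    rw [← h1]
    refine ih i0 ?_ a
    intro l
    rcases eq_or_ne l k with rfl | hl
    · simp [hik0, hk]
    · rw [hi0def, Function.update_of_ne hl, hi l]
      simp [Finset.mem_insert, hl]

lemma psi_norm (m : Finset (Fin N)) (i : Bits N) :
    ‖Psi U hd m (EuclideanSpace.single i 1)‖ = 1 := by
  show ‖W U m (init hd (EuclideanSpace.single i 1))‖ = 1
  rw [LinearIsometryEquiv.norm_map]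
  have h : init hd (EuclideanSpace.single i 1) =
      EuclideanSpace.single (((⟨0, hd⟩ : Fin d), i, (fun _ => false : Bits N)) : Idx N d) 1 := by
    ext p
    obtain ⟨a, j, b⟩ := p
    show (if a = (⟨0, hd⟩ : Fin d) ∧ b = (fun _ => false) then EuclideanSpace.single i 1 j else 0)
      = _
    rw [EuclideanSpace.single_apply, EuclideanSpace.single_apply]
    by_cases h1 : a = (⟨0, hd⟩ : Fin d) <;> by_cases h2 : b = (fun _ => false : Bits N) <;>
      by_cases h3 : j = i <;> simp [h1, h2, h3, Prod.ext_iff]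
  rw [h, EuclideanSpace.norm_single, norm_one]

end Main

/-- If `N ≥ 2` and an attack satisfies the no-error conditions
(T), (Z) and (X), then Eve's final probe state is the same for all inputs:
there is a single unit vector `f` such that for every bitstring `i` and every
`m`, `Ψ_m(δ_i) = f ⊗ δ_i ⊗ δ_{i∧m}`. -/
theorem protocol2_eve_state_constant (N d : ℕ) (hN : 2 ≤ N) (hd : 0 < d)
    (U : Fin (N + 1) → (H N d ≃ₗᵢ[ℂ] H N d))
    (hU : ∀ t, ActsOnFirstTwo (U t))
    (hT : CondT U hd) (hZ : CondZ U hd) (hX : CondX U hd) :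
    ∃ f : EuclideanSpace ℂ (Fin d),
      ‖f‖ = 1 ∧
      ∀ (i : Bits N) (m : Finset (Fin N)) (a : Fin d) (j b : Bits N),
        Psi U hd m (EuclideanSpace.single i 1) (a, j, b) =
          if j = i ∧ b = mask i m then f a else 0 := by
  classical
  have hcoef : ∀ (i : Bits N) (m : Finset (Fin N)) (a : Fin d),
      Psi U hd m (EuclideanSpace.single i 1) (a, i, mask i m) =
        Psi U hd ∅ (EuclideanSpace.single (fun _ => false) 1)
          (a, (fun _ => false), mask (fun _ => false) ∅) := by
    intro i m a
    rw [coef_m U hd hU hT i m a]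
    exact coef_all U hd hT hZ hX (Finset.univ.filter (fun k => i k = true)) i
      (fun k => by simp) a
  obtain ⟨f, hfa⟩ : ∃ f : EuclideanSpace ℂ (Fin d), ∀ a, f a = Psi U hd ∅
      (EuclideanSpace.single (fun _ => false) 1)
      (a, (fun _ => false), mask (fun _ => false) ∅) :=
    ⟨WithLp.toLp 2 (fun a => Psi U hd ∅ (EuclideanSpace.single (fun _ => false) 1)
      (a, (fun _ => false), mask (fun _ => false) ∅)), fun _ => rfl⟩
  have hsupp : ∀ (i : Bits N) (m : Finset (Fin N)) (a : Fin d) (j b : Bits N),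
      Psi U hd m (EuclideanSpace.single i 1) (a, j, b) =
        if j = i ∧ b = mask i m then f a else 0 := by
    intro i m a j b
    rw [psi_support U hd hT hZ i m a j b]
    split_ifs with h
    · rw [hfa]; exact hcoef i m a
    · rfl
  have hpsi : ‖Psi U hd ∅ (EuclideanSpace.single (fun _ => false : Bits N) 1)‖ = 1 :=
    psi_norm U hd ∅ _
  have hsum : ∑ p : Idx N d,
      ‖Psi U hd ∅ (EuclideanSpace.single (fun _ => false : Bits N) 1) p‖ ^ 2
      = ∑ a : Fin d, ‖f a‖ ^ 2 := by
    rw [Fintype.sum_prod_type]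
    refine Finset.sum_congr rfl fun a _ => ?_
    rw [Fintype.sum_prod_type]
    have hterm : ∀ (j b : Bits N),
        ‖Psi U hd ∅ (EuclideanSpace.single (fun _ => false : Bits N) 1) (a, j, b)‖ ^ 2 =
          if j = (fun _ => false : Bits N) then
            (if b = mask (fun _ => false) ∅ then ‖f a‖ ^ 2 else 0) else 0 := by
      intro j b
      rw [hsupp]
      by_cases h1 : j = (fun _ => false : Bits N) <;>
        by_cases h2 : b = mask (fun _ => false : Bits N) ∅ <;> simp [h1, h2]
    simp only [hterm]
    have h1 : ∀ j : Bits N, (∑ b : Bits N, if j = (fun _ => false : Bits N) then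
        (if b = mask (fun _ => false) ∅ then ‖f a‖ ^ 2 else 0) else 0) =
        if j = (fun _ => false : Bits N) then ‖f a‖ ^ 2 else 0 := by
      intro j
      by_cases hj : j = (fun _ => false : Bits N) <;> simp [hj, Finset.sum_ite_eq']
    simp only [h1]
    simp [Finset.sum_ite_eq']
  have hfnorm2 : ‖f‖ ^ 2 = 1 := by
    have h1 : ‖Psi U hd ∅ (EuclideanSpace.single (fun _ => false : Bits N) 1)‖ ^ 2 = 1 := by
      rw [hpsi]; norm_num
    rw [EuclideanSpace.norm_eq,
      Real.sq_sqrt (Finset.sum_nonneg fun _ _ => by positivity), hsum] at h1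
    rw [EuclideanSpace.norm_eq, Real.sq_sqrt (Finset.sum_nonneg fun _ _ => by positivity)]
    exact h1
  refine ⟨f, ?_, hsupp⟩
  rw [← Real.sqrt_sq (norm_nonneg f), hfnorm2, Real.sqrt_one]

end SQKD2
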